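/- A directed graph G with no isolated vertices has a Γ-irregular labeling if and only if there exists an injective map φ : V(G) → Γ such that Σ_{x ∈ C} φ(x) = 0 for every weakly connected component C of G. -/

import Mathlib

open Finset

/-- Weak reachability in a digraph: the reflexive-transitive closure of the
symmetrized adjacency relation. The weakly connected component of `x` is
`{y | WReach Adj x y}`. -/
def WReach {V : Type*} (Adj : V → V → Prop) : V → V → Prop :=
  Relation.ReflTransGen (fun a b => Adj a b ∨ Adj b a)

/-- The induced vertex map `φ_ψ` of an arc labeling `ψ`:
`φ_ψ(x) = Σ_{y ∈ N⁺(x)} ψ(x,y) − Σ_{y ∈ N⁻(x)} ψ(y,x)`. -/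
def vertexSum {V Γ : Type*} [Fintype V] [AddCommGroup Γ]
    (Adj : V → V → Prop) [DecidableRel Adj] (ψ : V → V → Γ) (x : V) : Γ :=
  (∑ y ∈ univ.filter (fun y => Adj x y), ψ x y)
    - (∑ y ∈ univ.filter (fun y => Adj y x), ψ y x)

/-- `G` is realizable in `Γ`: there is a `Γ`-irregular arc labeling, i.e. one whose
induced vertex map is injective. -/
def Realizable {V : Type*} [Fintype V] (Adj : V → V → Prop) [DecidableRel Adj]
    (Γ : Type*) [AddCommGroup Γ] : Prop :=
  ∃ ψ : V → V → Γ, Function.Injective (vertexSum Adj ψ)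

section Aux

variable {V Γ : Type*} [Fintype V] [DecidableEq V] [AddCommGroup Γ]
variable (Adj : V → V → Prop) [DecidableRel Adj]

lemma vs_zero : vertexSum Adj (0 : V → V → Γ) = 0 := by
  funext x; simp [vertexSum]

lemma vs_add (ψ₁ ψ₂ : V → V → Γ) :
    vertexSum Adj (ψ₁ + ψ₂) = vertexSum Adj ψ₁ + vertexSum Adj ψ₂ := by
  funext x
  simp only [vertexSum, Pi.add_apply, Finset.sum_add_distrib]
  abel

lemma vs_sum {ι : Type*} (s : Finset ι) (F : ι → V → V → Γ) :
    vertexSum Adj (∑ i ∈ s, F i) = ∑ i ∈ s, vertexSum Adj (F i) := by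
  classical
  induction s using Finset.cons_induction with
  | empty => simpa using vs_zero Adj (Γ := Γ)
  | cons a s ha ih => rw [Finset.sum_cons, Finset.sum_cons, vs_add, ih]

/-- divergence target: `g` at `u`, `-g` at `v`. -/
def dvg (u v : V) (g : Γ) : V → Γ :=
  fun x => (if x = u then g else 0) - (if x = v then g else 0)

lemma arc_flow {u v : V} (huv : Adj u v) (g : Γ) :
    ∃ ψ : V → V → Γ, vertexSum Adj ψ = dvg u v g := by
  refine ⟨fun a b => if a = u ∧ b = v then g else 0, funext fun x => ?_⟩
  have h1 : (∑ y ∈ univ.filter (fun y => Adj x y),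
      (if x = u ∧ y = v then g else 0)) = if x = u then g else 0 := by
    have e : ∀ y : V, (if x = u ∧ y = v then g else 0)
        = (if y = v then (if x = u then g else 0) else 0) := by
      intro y; by_cases h1 : x = u <;> by_cases h2 : y = v <;> simp [h1, h2]
    rw [Finset.sum_congr rfl fun y _ => e y,
      Finset.sum_ite_eq' (univ.filter (fun y => Adj x y)) v
        (fun _ => if x = u then g else 0)]
    by_cases hx : x = u
    · simp [hx, huv]
    · simp [hx]
  have h2 : (∑ y ∈ univ.filter (fun y => Adj y x),
      (if y = u ∧ x = v then g else 0)) = if x = v then g else 0 := by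
    have e : ∀ y : V, (if y = u ∧ x = v then g else 0)
        = (if y = u then (if x = v then g else 0) else 0) := by
      intro y; by_cases h1 : y = u <;> by_cases h2 : x = v <;> simp [h1, h2]
    rw [Finset.sum_congr rfl fun y _ => e y,
      Finset.sum_ite_eq' (univ.filter (fun y => Adj y x)) u
        (fun _ => if x = v then g else 0)]
    by_cases hx : x = v
    · simp [hx, huv]
    · simp [hx]
  rw [vertexSum, h1, h2]; rfl

lemma neg_ite' (P : Prop) [Decidable P] (g : Γ) :
    (if P then (-g) else 0) = -(if P then g else 0) := by
  split <;> simp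

lemma path_flow {a b : V} (h : WReach Adj a b) (g : Γ) :
    ∃ ψ : V → V → Γ, vertexSum Adj ψ = dvg a b g := by
  induction h with
  | refl => exact ⟨0, by funext x; rw [vs_zero]; simp [dvg]⟩
  | @tail c b' hac hcb ih =>
    obtain ⟨ψ₁, hψ₁⟩ := ih
    rcases hcb with h | h
    · obtain ⟨ψ₂, hψ₂⟩ := arc_flow Adj h g
      refine ⟨ψ₁ + ψ₂, ?_⟩
      rw [vs_add, hψ₁, hψ₂]
      funext x
      simp only [Pi.add_apply, dvg]
      abel
    · obtain ⟨ψ₂, hψ₂⟩ := arc_flow Adj h (-g)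
      refine ⟨ψ₁ + ψ₂, ?_⟩
      rw [vs_add, hψ₁, hψ₂]
      funext x
      simp only [Pi.add_apply, dvg, neg_ite']
      abel

def wSetoid : Setoid V :=
  ⟨WReach Adj, ⟨fun _ => Relation.ReflTransGen.refl,
    fun h => (@Relation.ReflTransGen.symmetric _ _ ⟨fun _ _ hab => hab.symm⟩).symm _ _ h,
    fun h1 h2 => Relation.ReflTransGen.trans h1 h2⟩⟩

end Aux

/-- Lemma (Cichacz–Tuza): a digraph with no isolated vertices has a `Γ`-irregular labeling
iff there is an injection `φ : V → Γ` whose values sum to `0` on every weakly connected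
component. -/
theorem stmt_8 {V Γ : Type*} [Fintype V] [AddCommGroup Γ]
    (Adj : V → V → Prop) [DecidableRel Adj]
    (hiso : ∀ x : V, ∃ y : V, Adj x y ∨ Adj y x) :
    (∃ ψ : V → V → Γ, Function.Injective (vertexSum Adj ψ)) ↔
      (∃ φ : V → Γ, Function.Injective φ ∧
        ∀ x : V, ∑ᶠ y ∈ {y | WReach Adj x y}, φ y = 0) := by
  classical
  constructor
  · rintro ⟨ψ, hinj⟩
    refine ⟨vertexSum Adj ψ, hinj, fun x₀ => ?_⟩
    have hset : {y | WReach Adj x₀ y} = ↑(univ.filter fun y => WReach Adj x₀ y) := by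
      ext y; simp
    rw [hset, finsum_mem_coe_finset]
    set p : V → Prop := fun y => WReach Adj x₀ y with hp
    have hpiff : ∀ a b : V, Adj a b → (p a ↔ p b) := by
      intro a b hab
      constructor
      · exact fun h => Relation.ReflTransGen.tail h (Or.inl hab)
      · exact fun h => Relation.ReflTransGen.tail h (Or.inr hab)
    have key : (∑ x ∈ univ.filter p, ∑ y ∈ univ.filter (fun y => Adj x y), ψ x y)
        = ∑ x ∈ univ.filter p, ∑ y ∈ univ.filter (fun y => Adj y x), ψ y x := by
      have e1 : (∑ x ∈ univ.filter p, ∑ y ∈ univ.filter (fun y => Adj x y), ψ x y)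
          = ∑ a ∈ univ, ∑ b ∈ univ, if p a ∧ Adj a b then ψ a b else 0 := by
        rw [Finset.sum_filter]
        refine Finset.sum_congr rfl fun a _ => ?_
        by_cases ha : p a
        · rw [if_pos ha, Finset.sum_filter]
          exact Finset.sum_congr rfl fun b _ => by
            simp only [eq_true ha, true_and]
        · rw [if_neg ha]
          exact (Finset.sum_eq_zero fun b _ => by simp [eq_false ha]).symm
      have e2' : (∑ x ∈ univ.filter p, ∑ y ∈ univ.filter (fun y => Adj y x), ψ y x)
          = ∑ x ∈ univ, ∑ y ∈ univ, if p x ∧ Adj y x then ψ y x else 0 := by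
        rw [Finset.sum_filter]
        refine Finset.sum_congr rfl fun a _ => ?_
        by_cases ha : p a
        · rw [if_pos ha, Finset.sum_filter]
          exact Finset.sum_congr rfl fun b _ => by
            simp only [eq_true ha, true_and]
        · rw [if_neg ha]
          exact (Finset.sum_eq_zero fun b _ => by simp [eq_false ha]).symm
      have e2 : (∑ x ∈ univ.filter p, ∑ y ∈ univ.filter (fun y => Adj y x), ψ y x)
          = ∑ a ∈ univ, ∑ b ∈ univ, if p b ∧ Adj a b then ψ a b else 0 := by
        rw [e2', Finset.sum_comm]
      rw [e1, e2]
      refine Finset.sum_congr rfl fun a _ => Finset.sum_congr rfl fun b _ => ?_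
      by_cases h : Adj a b
      · by_cases hpa : p a
        · have hpb : p b := (hpiff a b h).1 hpa
          simp [h, hpa, hpb]
        · have hpb : ¬ p b := fun hb => hpa ((hpiff a b h).2 hb)
          simp [hpa, hpb]
      · simp [h]
    have expand : ∑ x ∈ univ.filter p, vertexSum Adj ψ x
        = (∑ x ∈ univ.filter p, ∑ y ∈ univ.filter (fun y => Adj x y), ψ x y)
          - (∑ x ∈ univ.filter p, ∑ y ∈ univ.filter (fun y => Adj y x), ψ y x) := by
      rw [← Finset.sum_sub_distrib]
      rfl
    rw [expand, key, sub_self]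
  · rintro ⟨φ, hinj, hsum⟩
    letI s : Setoid V := wSetoid Adj
    let r : V → V := fun x => (Quotient.mk s x).out
    have hr1 : ∀ x : V, WReach Adj x (r x) := fun x => s.iseqv.symm (Quotient.mk_out x)
    have hmk : ∀ x : V, Quotient.mk s (r x) = Quotient.mk s x :=
      fun x => Quotient.sound (Quotient.mk_out x)
    have hidem : ∀ x : V, r (r x) = r x := by
      intro x
      show (Quotient.mk s (r x)).out = (Quotient.mk s x).out
      rw [hmk]
    have hreq : ∀ x y : V, r y = r x ↔ WReach Adj x y := by
      intro x y
      constructor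
      · intro h
        have hq : Quotient.mk s y = Quotient.mk s x := by
          rw [← hmk y, h, hmk x]
        exact s.iseqv.symm (Quotient.exact hq)
      · intro h
        show (Quotient.mk s y).out = (Quotient.mk s x).out
        have hq : Quotient.mk s y = Quotient.mk s x :=
          Quotient.sound (s.iseqv.symm h)
        rw [hq]
    choose F hF using fun y => path_flow Adj (hr1 y) (φ y)
    refine ⟨∑ y ∈ univ, F y, ?_⟩
    have hvs : vertexSum Adj (∑ y ∈ univ, F y) = φ := by
      funext x
      rw [vs_sum]
      have happ : (∑ y ∈ univ, vertexSum Adj (F y)) x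
          = ∑ y ∈ univ, dvg y (r y) (φ y) x := by
        rw [Finset.sum_apply]
        exact Finset.sum_congr rfl fun y _ => by rw [hF]
      rw [happ]
      simp only [dvg]
      rw [Finset.sum_sub_distrib]
      have h1 : (∑ y ∈ univ, if x = y then φ y else 0) = φ x := by
        simp
      have h2 : (∑ y ∈ univ, if x = r y then φ y else 0) = 0 := by
        have hrw : (∑ y ∈ univ, if x = r y then φ y else 0)
            = ∑ y ∈ univ.filter (fun y => r y = x), φ y := by
          rw [Finset.sum_filter]
          exact Finset.sum_congr rfl fun y _ => if_congr eq_comm rfl rfl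
        rw [hrw]
        by_cases hx : r x = x
        · have hfe : univ.filter (fun y => r y = x)
              = univ.filter (fun y => WReach Adj x y) := by
            ext y
            simp only [Finset.mem_filter, Finset.mem_univ, true_and]
            rw [← hreq]
            constructor
            · intro h; rw [h, hx]
            · intro h; rw [h, hx]
          rw [hfe]
          have hz := hsum x
          have hset : {y | WReach Adj x y}
              = ↑(univ.filter fun y => WReach Adj x y) := by
            ext y; simp
          rw [hset, finsum_mem_coe_finset] at hz
          exact hz
        · refine Finset.sum_eq_zero fun y hy => ?_
          rw [Finset.mem_filter] at hy
          exact absurd (show r x = x by rw [← hy.2]; exact hidem y) hx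
      rw [h1, h2, sub_zero]
    rw [hvs]
    exact hinj
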